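/- arXiv:2401.06047 — 2 statements merged into one kernel-verified Lean document; each statement's English description precedes it below -/
import Mathlib

section
/- Let Z = {(R_1,s_1),...,(R_n,s_n)} be a training set of ranges with selectivities, and let P be a set of representative points containing exactly one point from each equivalence class (under same-range-membership) of ℝ^d with respect to {R_1,...,R_n}. Then the minimum of err_1(D,Z) = (1/n)∑_i |s_D(R_i) − s_i| over all discrete distributions D equals the minimum over discrete distributions whose support is contained in P. -/
open Classical in
/-- The minimum `ℓ₁` empirical error over all discrete distributions equals the
minimum over discrete distributions supported on a set `P` of representatives,
one from each equivalence class under same-range-membership. -/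
theorem stmt_1 (d n : ℕ) (R : Fin n → Set (Fin d → ℝ)) (s : Fin n → ℝ)
    (hs : ∀ i, s i ∈ Set.Icc (0:ℝ) 1)
    (P : Set (Fin d → ℝ))
    (hP : ∀ x : Fin d → ℝ, ∃! p, p ∈ P ∧ ∀ i, x ∈ R i ↔ p ∈ R i) :
    sInf { e : ℝ | ∃ (supp : Finset (Fin d → ℝ)) (w : (Fin d → ℝ) → ℝ),
        (∀ p ∈ supp, 0 < w p) ∧ (∑ p ∈ supp, w p = 1) ∧
        e = (1 / n) * ∑ i, |(∑ p ∈ supp, (R i).indicator (fun _ => w p) p) - s i| }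
    = sInf { e : ℝ | ∃ (supp : Finset (Fin d → ℝ)) (w : (Fin d → ℝ) → ℝ),
        (↑supp ⊆ P) ∧ (∀ p ∈ supp, 0 < w p) ∧ (∑ p ∈ supp, w p = 1) ∧
        e = (1 / n) * ∑ i, |(∑ p ∈ supp, (R i).indicator (fun _ => w p) p) - s i| } := by
  congr 1
  ext e
  simp only [Set.mem_setOf_eq]
  constructor
  · rintro ⟨supp, w, hw, hws, rfl⟩
    set π : (Fin d → ℝ) → (Fin d → ℝ) := fun x => (hP x).choose with hπdef
    have hπP : ∀ x, π x ∈ P := fun x => (hP x).choose_spec.1.1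
    have hπR : ∀ x i, x ∈ R i ↔ π x ∈ R i := fun x => (hP x).choose_spec.1.2
    refine ⟨supp.image π, fun q => ∑ p ∈ supp.filter (fun p => π p = q), w p,
      ?_, ?_, ?_, ?_⟩
    · intro q hq
      obtain ⟨p, _, rfl⟩ := Finset.mem_image.mp (by exact_mod_cast hq)
      exact hπP p
    · intro q hq
      obtain ⟨p, hp, rfl⟩ := Finset.mem_image.mp hq
      exact Finset.sum_pos (fun x hx => hw x (Finset.mem_filter.mp hx).1)
        ⟨p, Finset.mem_filter.mpr ⟨hp, rfl⟩⟩
    · rw [← hws]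
      exact Finset.sum_image' w (fun c _ => rfl)
    · congr 1
      apply Finset.sum_congr rfl
      intro i _
      congr 1
      congr 1
      rw [Finset.sum_image' (fun p => (R i).indicator (fun _ => w p) p)]
      intro c hc
      by_cases hci : c ∈ R i
      · have hπci : π c ∈ R i := (hπR c i).mp hci
        rw [Set.indicator_of_mem hπci]
        apply Finset.sum_congr rfl
        intro p hp
        have hpc : π p = π c := (Finset.mem_filter.mp hp).2
        have hpi : p ∈ R i := (hπR p i).mpr (hpc ▸ hπci)
        rw [Set.indicator_of_mem hpi]
      · have hπci : π c ∉ R i := fun h => hci ((hπR c i).mpr h)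
        rw [Set.indicator_of_notMem hπci]
        symm
        apply Finset.sum_eq_zero
        intro p hp
        have hpc : π p = π c := (Finset.mem_filter.mp hp).2
        have hpi : p ∉ R i := fun h => hπci (hpc ▸ (hπR p i).mp h)
        rw [Set.indicator_of_notMem hpi]
  · rintro ⟨supp, w, _, hw, hws, rfl⟩
    exact ⟨supp, w, hw, hws, rfl⟩
end

section
/- Consider the training set Z consisting of pairs (R_i, 0) for i = 1,…,n−1 (each R_i a rectangle in ℝ^d) together with (B, 1) for a box B. If the union of R_1,...,R_{n−1} covers B, then every discrete distribution D satisfies err_p(D, Z) > 0 for each p ∈ {1, 2, ∞}; in fact err_p(D, Z) > 1/(2n²) for p ∈ {1,2}. Conversely, if there is a point q ∈ B not covered by any R_i, then the single-point distribution D = {(q, 1)} satisfies err_p(D, Z) = 0. -/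
/-- Selectivity of a set `A` under the discrete distribution given by a finite
support `supp` and weights `w`. -/
noncomputable def sel13 (d : ℕ) (supp : Finset (Fin d → ℝ))
    (w : (Fin d → ℝ) → ℝ) (A : Set (Fin d → ℝ)) : ℝ :=
  ∑ x ∈ supp, A.indicator (fun _ => w x) x

/-- Reduction from coverage: for the training set consisting of `(R i, 0)` for
`i = 1,…,k` and `(B, 1)` (so `n = k+1` queries), if `⋃ R i` covers `B` then
every discrete distribution has `err_p > 1/(2n²)` for `p ∈ {1,2}` and
`err_∞ > 0`; conversely a point `q ∈ B` outside all `R i` yields a one-point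
distribution with zero error for `p ∈ {1, 2, ∞}`. -/
theorem stmt_13 (d k : ℕ) (R : Fin k → Set (Fin d → ℝ)) (B : Set (Fin d → ℝ)) :
    ((B ⊆ ⋃ i, R i) →
      ∀ (supp : Finset (Fin d → ℝ)) (w : (Fin d → ℝ) → ℝ),
        (∀ x ∈ supp, 0 < w x) → (∑ x ∈ supp, w x = 1) →
        (1/(2*((k:ℝ)+1)^2) <
          (1/((k:ℝ)+1)) * ((∑ i, |sel13 d supp w (R i) - 0|)
            + |sel13 d supp w B - 1|)) ∧
        (1/(2*((k:ℝ)+1)^2) <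
          (1/((k:ℝ)+1)) * ((∑ i, |sel13 d supp w (R i) - 0|^2)
            + |sel13 d supp w B - 1|^2)) ∧
        (0 < Finset.univ.sup' ⟨(0 : Fin (k+1)), Finset.mem_univ _⟩
          (Fin.snoc (fun i => |sel13 d supp w (R i) - 0|)
            (|sel13 d supp w B - 1|)))) ∧
    (∀ q : Fin d → ℝ, q ∈ B → (∀ i, q ∉ R i) →
      ((1/((k:ℝ)+1)) * ((∑ i, |sel13 d {q} (fun _ => 1) (R i) - 0|)
          + |sel13 d {q} (fun _ => 1) B - 1|) = 0) ∧
      ((1/((k:ℝ)+1)) * ((∑ i, |sel13 d {q} (fun _ => 1) (R i) - 0|^2)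
          + |sel13 d {q} (fun _ => 1) B - 1|^2) = 0) ∧
      (Finset.univ.sup' ⟨(0 : Fin (k+1)), Finset.mem_univ _⟩
        (Fin.snoc (fun i => |sel13 d {q} (fun _ => 1) (R i) - 0|)
          (|sel13 d {q} (fun _ => 1) B - 1|)) = 0)) := by
  constructor
  · intro hcov supp w hw hsum
    have hk : (0:ℝ) < (k:ℝ) + 1 := by positivity
    have hnn : ∀ A : Set (Fin d → ℝ), 0 ≤ sel13 d supp w A := by
      intro A
      exact Finset.sum_nonneg fun x hx =>
        Set.indicator_nonneg (fun _ _ => (hw x hx).le) x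
    -- the selectivity of B is at most the sum of the selectivities of the R i
    have hle : sel13 d supp w B ≤ ∑ i, sel13 d supp w (R i) := by
      unfold sel13
      rw [Finset.sum_comm]
      apply Finset.sum_le_sum
      intro x hx
      by_cases hxB : x ∈ B
      · obtain ⟨i, hi⟩ := Set.mem_iUnion.mp (hcov hxB)
        rw [Set.indicator_of_mem hxB]
        calc w x = (R i).indicator (fun _ => w x) x := by
              rw [Set.indicator_of_mem hi]
          _ ≤ ∑ j, (R j).indicator (fun _ => w x) x :=
              Finset.single_le_sum
                (f := fun j => (R j).indicator (fun _ => w x) x)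
                (fun j _ => Set.indicator_nonneg (fun _ _ => (hw x hx).le) x)
                (Finset.mem_univ i)
      · rw [Set.indicator_of_notMem hxB]
        exact Finset.sum_nonneg fun j _ =>
          Set.indicator_nonneg (fun _ _ => (hw x hx).le) x
    have habs : ∀ i, |sel13 d supp w (R i) - 0| = sel13 d supp w (R i) := by
      intro i; rw [sub_zero, abs_of_nonneg (hnn _)]
    have hB1 : 1 - sel13 d supp w B ≤ |sel13 d supp w B - 1| := by
      rw [abs_sub_comm]; exact le_abs_self _
    -- key: the sum of the absolute errors is at least 1
    have key1 : 1 ≤ (∑ i, |sel13 d supp w (R i) - 0|) + |sel13 d supp w B - 1| := by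
      have : ∑ i, |sel13 d supp w (R i) - 0| = ∑ i, sel13 d supp w (R i) :=
        Finset.sum_congr rfl fun i _ => habs i
      rw [this]
      linarith
    refine ⟨?_, ?_, ?_⟩
    · -- p = 1
      have h1 : 1/((k:ℝ)+1) ≤
          (1/((k:ℝ)+1)) * ((∑ i, |sel13 d supp w (R i) - 0|)
            + |sel13 d supp w B - 1|) := by
        rw [div_mul_eq_mul_div, le_div_iff₀ hk, one_div,
          inv_mul_cancel₀ hk.ne', one_mul]
        exact key1
      have h2 : 1/(2*((k:ℝ)+1)^2) < 1/((k:ℝ)+1) := by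
        apply div_lt_div_of_pos_left one_pos (by positivity)
        nlinarith
      linarith
    · -- p = 2 : Cauchy-Schwarz
      set F : Fin (k+1) → ℝ := Fin.snoc (fun i => |sel13 d supp w (R i) - 0|)
        (|sel13 d supp w B - 1|) with hF
      have cs := sq_sum_le_card_mul_sum_sq
        (s := (Finset.univ : Finset (Fin (k+1)))) (f := F)
      rw [Fin.sum_univ_castSucc (f := F),
        Fin.sum_univ_castSucc (f := fun j => F j ^ 2)] at cs
      simp only [hF] at cs
      simp only [Fin.snoc_castSucc, Fin.snoc_last, Finset.card_univ,
        Fintype.card_fin] at cs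
      push_cast at cs
      have hsq : 1 ≤ ((k:ℝ)+1) * ((∑ i, |sel13 d supp w (R i) - 0|^2)
          + |sel13 d supp w B - 1|^2) := by
        nlinarith
      rw [div_lt_iff₀ (by positivity), one_div, inv_mul_eq_div,
        div_mul_eq_mul_div, lt_div_iff₀ hk]
      nlinarith
    · -- p = ∞
      by_cases hb : sel13 d supp w B = 1
      · have hpos : (0:ℝ) < ∑ i, sel13 d supp w (R i) := by
          rw [hb] at hle; linarith
        have : ∃ i ∈ (Finset.univ : Finset (Fin k)),
            (0:ℝ) < sel13 d supp w (R i) := by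
          by_contra h
          push_neg at h
          have : ∑ i, sel13 d supp w (R i) ≤ 0 :=
            Finset.sum_nonpos fun i hi => h i hi
          linarith
        obtain ⟨i, _, hi⟩ := this
        have hle' := Finset.le_sup'
          (f := Fin.snoc (fun i => |sel13 d supp w (R i) - 0|)
            (|sel13 d supp w B - 1|)) (b := i.castSucc) (Finset.mem_univ _)
        rw [Fin.snoc_castSucc] at hle'
        exact lt_of_lt_of_le (by rw [habs]; exact hi) hle'
      · have hle' := Finset.le_sup'
          (f := Fin.snoc (fun i => |sel13 d supp w (R i) - 0|)
            (|sel13 d supp w B - 1|)) (b := Fin.last k) (Finset.mem_univ _)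
        rw [Fin.snoc_last] at hle'
        exact lt_of_lt_of_le (abs_pos.mpr (sub_ne_zero.mpr hb)) hle'
  · intro q hqB hqR
    have hR : ∀ i, sel13 d {q} (fun _ => 1) (R i) = 0 := by
      intro i
      simp [sel13, Set.indicator_of_notMem (hqR i)]
    have hB : sel13 d {q} (fun _ => 1) B = 1 := by
      simp [sel13, Set.indicator_of_mem hqB]
    refine ⟨?_, ?_, ?_⟩
    · simp [hR, hB]
    · simp [hR, hB]
    · have hf : (Fin.snoc (fun i => |sel13 d {q} (fun _ => 1) (R i) - 0|)
          (|sel13 d {q} (fun _ => 1) B - 1|) : Fin (k+1) → ℝ)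
          = fun _ => 0 := by
        funext j
        refine Fin.lastCases ?_ (fun i => ?_) j
        · simp [Fin.snoc_last, hB]
        · simp [Fin.snoc_castSucc, hR]
      rw [hf]; exact Finset.sup'_const _ _
end
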